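/- Let G be a connected finite graph and let P be a set of exactly k ≥ 3 longest paths of G. Then every path P ∈ P carries at least one good path, i.e., t'_P(P) ≥ 1. -/

import Mathlib

open SimpleGraph

/-- `w` is a longest path of `G`: it is a path and no path of `G` is longer. -/
def IsLongestPath {V : Type*} (G : SimpleGraph V) {u v : V} (w : G.Walk u v) : Prop :=
  w.IsPath ∧ ∀ (a b : V) (q : G.Walk a b), q.IsPath → q.length ≤ w.length

/-- The distance `d_G(x, V(w))` from a vertex `x` to the vertex set of a walk `w`. -/
noncomputable def distToWalk {V : Type*} (G : SimpleGraph V) (x : V) {u v : V}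
    (w : G.Walk u v) : ℕ :=
  sInf {d : ℕ | ∃ y ∈ w.support, G.dist x y = d}

/-- The path-distance-function `f(G, 𝒫)` of a family `𝒫` of paths of `G`. -/
noncomputable def pdf {V : Type*} (G : SimpleGraph V) {k : ℕ}
    (P : Fin k → Σ u : V, Σ v : V, G.Walk u v) : ℕ :=
  sInf {s : ℕ | ∃ x : V, s = ∑ i, distToWalk G x (P i).2.2}

/-- `Q` is an infix (subpath) of the walk `W`. -/
def IsInfixOf {V : Type*} (G : SimpleGraph V) {a b u v : V} (Q : G.Walk a b)
    (W : G.Walk u v) : Prop :=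
  ∃ (w₁ : G.Walk u a) (w₂ : G.Walk b v), W = (w₁.append Q).append w₂

/-- `Q` is a good path on the member `P i0` of the family `P`: it is a subpath of `P i0`,
its end-vertices lie on two distinct other members `P i` and `P j`, it meets every other
member of the family, and no internal vertex of `Q` lies on `P i` or `P j`. -/
def IsGoodPath {V : Type*} (G : SimpleGraph V) {k : ℕ}
    (P : Fin k → Σ u : V, Σ v : V, G.Walk u v) (i0 : Fin k) {a b : V}
    (Q : G.Walk a b) : Prop :=
  IsInfixOf G Q (P i0).2.2 ∧
  ∃ i j : Fin k, i ≠ i0 ∧ j ≠ i0 ∧ i ≠ j ∧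
    a ∈ (P i).2.2.support ∧ b ∈ (P j).2.2.support ∧
    (∀ m : Fin k, m ≠ i0 → ∃ x ∈ Q.support, x ∈ (P m).2.2.support) ∧
    (∀ x ∈ Q.support, x ≠ a → x ≠ b →
      x ∉ (P i).2.2.support ∧ x ∉ (P j).2.2.support)

/-- `t'_𝒫(P i0)`: the maximum number of pairwise edge-disjoint good paths on `P i0`. -/
noncomputable def tprime {V : Type*} (G : SimpleGraph V) {k : ℕ}
    (P : Fin k → Σ u : V, Σ v : V, G.Walk u v) (i0 : Fin k) : ℕ :=
  sSup {n : ℕ | ∃ Qs : Fin n → Σ a : V, Σ b : V, G.Walk a b,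
    Function.Injective Qs ∧ (∀ t, IsGoodPath G P i0 (Qs t).2.2) ∧
    Pairwise fun s t => ∀ e ∈ (Qs s).2.2.edges, e ∉ (Qs t).2.2.edges}

section Aux
variable {V : Type*} {G : SimpleGraph V}

lemma aux_len_zero {x z : V} (p : G.Walk x z) (h : p.length = 0) : x = z := by
  cases p with
  | nil => rfl
  | cons _ _ => simp at h

lemma aux_eq_of_support_eq : ∀ {u v : V} (p q : G.Walk u v), p.support = q.support → p = q := by
  intro u v p
  induction p with
  | nil =>
    intro q h
    cases q with
    | nil => rfl
    | cons h' q' =>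
      rw [Walk.support_nil, Walk.support_cons] at h
      exact absurd (List.cons.injEq _ _ _ _ ▸ h).2.symm (Walk.support_ne_nil _)
  | cons ha p ih =>
    intro q h
    cases q with
    | nil =>
      rw [Walk.support_cons, Walk.support_nil] at h
      exact absurd (List.cons.injEq _ _ _ _ ▸ h).2 (Walk.support_ne_nil _)
    | cons hb q' =>
      rw [Walk.support_cons, Walk.support_cons] at h
      have hsupp : p.support = q'.support := (List.cons.injEq _ _ _ _ ▸ h).2
      have hw := congrArg List.head? hsupp
      rw [p.support_eq_cons, q'.support_eq_cons] at hw
      simp only [List.head?_cons, Option.some.injEq] at hw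
      subst hw
      exact congrArg (Walk.cons ha) (ih q' hsupp)

lemma aux_sigma_support_injective :
    Function.Injective (fun x : Σ a : V, Σ b : V, G.Walk a b => x.2.2.support) := by
  rintro ⟨a, b, p⟩ ⟨c, d, q⟩ h
  simp only at h
  have hac : a = c := by
    rw [p.support_eq_cons, q.support_eq_cons] at h
    exact (List.cons.injEq _ _ _ _ ▸ h).1
  subst hac
  have hbd : b = d := by
    have h1 : p.support.getLast? = some b := by
      rw [List.getLast?_eq_getLast (p.support_ne_nil), p.getLast_support]
    have h2 : q.support.getLast? = some d := by
      rw [List.getLast?_eq_getLast (q.support_ne_nil), q.getLast_support]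
    rw [h, h2] at h1
    exact (Option.some.injEq _ _ ▸ h1).symm
  subst hbd
  rw [aux_eq_of_support_eq p q h]

end Aux

section Aux2
variable {V : Type*} {G : SimpleGraph V}

lemma aux_half {x u v : V} (W : G.Walk u v) (hW : W.IsPath) (hx : x ∈ W.support) :
    ∃ (s : V) (C : G.Walk s x), C.IsPath ∧ (∀ z ∈ C.support, z ∈ W.support) ∧
      W.length ≤ 2 * C.length := by
  classical
  have hlen : (W.takeUntil x hx).length + (W.dropUntil x hx).length = W.length := by
    have := congrArg Walk.length (W.take_spec hx)
    rwa [Walk.length_append] at this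
  by_cases hc : (W.dropUntil x hx).length ≤ (W.takeUntil x hx).length
  · exact ⟨u, W.takeUntil x hx, hW.takeUntil hx,
      fun z hz => W.support_takeUntil_subset hx hz, by omega⟩
  · refine ⟨v, (W.dropUntil x hx).reverse, (hW.dropUntil hx).reverse,
      fun z hz => W.support_dropUntil_subset hx (by simpa using hz), ?_⟩
    rw [Walk.length_reverse]; omega

lemma longest_intersect {u1 v1 u2 v2 : V} (hG : G.Connected)
    {W1 : G.Walk u1 v1} {W2 : G.Walk u2 v2}
    (h1 : IsLongestPath G W1) (h2 : IsLongestPath G W2) :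
    ∃ x ∈ W1.support, x ∈ W2.support := by
  classical
  by_contra hdisj
  push_neg at hdisj
  have hL : W2.length = W1.length := le_antisymm (h1.2 _ _ W2 h2.1) (h2.2 _ _ W1 h1.1)
  set S : Set ℕ := {n | ∃ (x y : V) (R : G.Walk x y), R.IsPath ∧ x ∈ W1.support ∧
    y ∈ W2.support ∧ R.length = n} with hS
  have hSne : S.Nonempty := by
    obtain ⟨W⟩ := hG.preconnected u1 u2
    exact ⟨(W.toPath : G.Walk u1 u2).length, u1, u2, W.toPath, W.toPath.2,
      W1.start_mem_support, W2.start_mem_support, rfl⟩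
  obtain ⟨x, y, R, hR, hx, hy, hlen⟩ := Nat.sInf_mem hSne
  have claimA : ∀ z ∈ R.support, z ∈ W1.support → z = x := by
    intro z hz hzW1
    by_contra hzx
    have hsp := congrArg Walk.length (R.take_spec hz)
    rw [Walk.length_append] at hsp
    have ht1 : 1 ≤ (R.takeUntil z hz).length := by
      rcases Nat.eq_zero_or_pos (R.takeUntil z hz).length with h0 | h
      · exact absurd (aux_len_zero _ h0).symm hzx
      · exact h
    have hmem : (R.dropUntil z hz).length ∈ S :=
      ⟨z, y, R.dropUntil z hz, hR.dropUntil hz, hzW1, hy, rfl⟩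
    have := Nat.sInf_le hmem
    omega
  have claimB : ∀ z ∈ R.support, z ∈ W2.support → z = y := by
    intro z hz hzW2
    by_contra hzy
    have hsp := congrArg Walk.length (R.take_spec hz)
    rw [Walk.length_append] at hsp
    have ht1 : 1 ≤ (R.dropUntil z hz).length := by
      rcases Nat.eq_zero_or_pos (R.dropUntil z hz).length with h0 | h
      · exact absurd (aux_len_zero _ h0) hzy
      · exact h
    have hmem : (R.takeUntil z hz).length ∈ S :=
      ⟨x, z, R.takeUntil z hz, hR.takeUntil hz, hx, hzW2, rfl⟩
    have := Nat.sInf_le hmem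
    omega
  have hxy : x ≠ y := fun h => hdisj x hx (h ▸ hy)
  have hn1 : 1 ≤ R.length := by
    rcases Nat.eq_zero_or_pos R.length with h0 | h
    · exact absurd (aux_len_zero _ h0) hxy
    · exact h
  obtain ⟨s1, C1, hC1p, hC1s, hC1l⟩ := aux_half W1 h1.1 hx
  obtain ⟨s2, C2, hC2p, hC2s, hC2l⟩ := aux_half W2 h2.1 hy
  have hWWlen : (C1.append (R.append C2.reverse)).length
      = C1.length + (R.length + C2.length) := by
    rw [Walk.length_append, Walk.length_append, Walk.length_reverse]
  have hWWpath : (C1.append (R.append C2.reverse)).IsPath := by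
    rw [Walk.isPath_def, Walk.support_append, Walk.tail_support_append]
    have hyD : y ∉ C2.reverse.support.tail := by
      have := hC2p.reverse.support_nodup
      rw [C2.reverse.support_eq_cons] at this
      exact (List.nodup_cons.mp this).1
    have hxR : x ∉ R.support.tail := by
      have := hR.support_nodup
      rw [R.support_eq_cons] at this
      exact (List.nodup_cons.mp this).1
    have hDsub : ∀ z ∈ C2.reverse.support.tail, z ∈ W2.support := fun z hz =>
      hC2s z (by simpa using List.mem_of_mem_tail hz)
    refine List.nodup_append'.mpr ⟨hC1p.support_nodup, List.nodup_append'.mpr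
      ⟨hR.support_nodup.sublist (List.tail_sublist _),
       hC2p.reverse.support_nodup.sublist (List.tail_sublist _), ?_⟩, ?_⟩
    · intro z hz1 hz2
      have hz2' := hDsub z hz2
      have := claimB z (List.mem_of_mem_tail hz1) hz2'
      subst this
      exact hyD hz2
    · intro z hz hmem
      have hzW1 : z ∈ W1.support := hC1s z hz
      rcases List.mem_append.mp hmem with h' | h'
      · have := claimA z (List.mem_of_mem_tail h') hzW1
        subst this
        exact hxR h'
      · exact hdisj z hzW1 (hDsub z h')
  have hle := h1.2 _ _ _ hWWpath
  rw [hWWlen] at hle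
  omega

end Aux2

section Aux3
variable {V : Type*} {G : SimpleGraph V}

lemma aux_nodup_of_infix {a b u v : V} {Q : G.Walk a b} {W : G.Walk u v}
    (hinf : IsInfixOf G Q W) (hW : W.IsPath) : Q.support.Nodup := by
  obtain ⟨w1, w2, hdec⟩ := hinf
  have hnd := hW.support_nodup
  rw [hdec, Walk.support_append, Walk.support_append] at hnd
  have h1 : (w1.support ++ Q.support.tail).Nodup := hnd.of_append_left
  rw [List.nodup_append'] at h1
  rw [Q.support_eq_cons]
  exact List.nodup_cons.mpr ⟨fun hmem => h1.2.2 w1.end_mem_support hmem, h1.2.1⟩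

end Aux3

/-- Every member of a family of `k ≥ 3` longest paths of a connected graph carries
at least one good path, i.e. `t'_𝒫(P) ≥ 1`. -/
theorem good_path_exists {V : Type*} [Fintype V] (G : SimpleGraph V)
    (hG : G.Connected) (k : ℕ) (hk : 3 ≤ k)
    (P : Fin k → Σ u : V, Σ v : V, G.Walk u v)
    (hinj : Function.Injective P) (hlong : ∀ i, IsLongestPath G (P i).2.2)
    (i0 : Fin k) :
    (∃ (a b : V) (Q : G.Walk a b), IsGoodPath G P i0 Q) ∧ 1 ≤ tprime G P i0 := by
  classical
  set T : Set ℕ := {n | ∃ (a b : V) (Q : G.Walk a b), IsInfixOf G Q (P i0).2.2 ∧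
      (∀ m, m ≠ i0 → ∃ x ∈ Q.support, x ∈ (P m).2.2.support) ∧ Q.length = n} with hT
  have hTne : T.Nonempty := by
    refine ⟨(P i0).2.2.length, (P i0).1, (P i0).2.1, (P i0).2.2,
      ⟨Walk.nil, Walk.nil, by rw [Walk.nil_append, Walk.append_nil]⟩, ?_, rfl⟩
    intro m _
    exact longest_intersect hG (hlong i0) (hlong m)
  obtain ⟨a, b, Q, hinf, hmeet, hlen⟩ := Nat.sInf_mem hTne
  have hgood : IsGoodPath G P i0 Q := by
    rcases Nat.eq_zero_or_pos Q.length with h0 | hpos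
    · cases Q with
      | cons _ _ => simp at h0
      | nil =>
        have hcard : 1 < (Finset.univ.erase i0).card := by
          rw [Finset.card_erase_of_mem (Finset.mem_univ _), Finset.card_univ,
            Fintype.card_fin]
          omega
        obtain ⟨i, hi, j, hj, hij⟩ := Finset.one_lt_card.mp hcard
        refine ⟨hinf, i, j, (Finset.mem_erase.mp hi).1, (Finset.mem_erase.mp hj).1,
          hij, ?_, ?_, hmeet, ?_⟩
        · obtain ⟨x, hx1, hx2⟩ := hmeet i (Finset.mem_erase.mp hi).1
          rw [Walk.support_nil, List.mem_singleton] at hx1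
          rwa [hx1] at hx2
        · obtain ⟨x, hx1, hx2⟩ := hmeet j (Finset.mem_erase.mp hj).1
          rw [Walk.support_nil, List.mem_singleton] at hx1
          rwa [hx1] at hx2
        · intro x hxQ hxa _
          rw [Walk.support_nil, List.mem_singleton] at hxQ
          exact absurd hxQ hxa
    · cases Q with
      | nil => simp at hpos
      | cons hadj Q' =>
        obtain ⟨w1, w2, hdec⟩ := id hinf
        have hinf' : IsInfixOf G Q' (P i0).2.2 :=
          ⟨w1.concat hadj, w2, by rw [Walk.concat_append]; exact hdec⟩
        have hQ'fail : ∃ i, i ≠ i0 ∧ ∀ x ∈ Q'.support, x ∉ (P i).2.2.support := by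
          by_contra hcon
          push_neg at hcon
          have hmem : Q'.length ∈ T := ⟨_, _, Q', hinf', hcon, rfl⟩
          have h := Nat.sInf_le hmem
          have h2 : (Walk.cons hadj Q').length = Q'.length + 1 := by
            rw [Walk.length_cons]
          omega
        obtain ⟨c', Q'', hadj', hconcat⟩ := Walk.exists_cons_eq_concat hadj Q'
        have hinf'' : IsInfixOf G Q'' (P i0).2.2 := by
          refine ⟨w1, (Walk.cons hadj' Walk.nil).append w2, ?_⟩
          rw [hdec, hconcat]
          rw [Walk.concat_eq_append]
          simp only [← Walk.append_assoc]
        have hQ''fail : ∃ j, j ≠ i0 ∧ ∀ x ∈ Q''.support, x ∉ (P j).2.2.support := by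
          by_contra hcon
          push_neg at hcon
          have hmem : Q''.length ∈ T := ⟨_, _, Q'', hinf'', hcon, rfl⟩
          have h := Nat.sInf_le hmem
          have h2 : (Walk.cons hadj Q').length = Q''.length + 1 := by
            rw [hconcat, Walk.length_concat]
          omega
        obtain ⟨i, hi0, hiQ'⟩ := hQ'fail
        obtain ⟨j, hj0, hjQ''⟩ := hQ''fail
        have hsupQ : (Walk.cons hadj Q').support = a :: Q'.support :=
          Walk.support_cons _ _
        have hsupQ'' : (Walk.cons hadj Q').support = Q''.support ++ [b] := by
          rw [hconcat, Walk.support_concat]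
        have haPi : a ∈ (P i).2.2.support := by
          obtain ⟨x, hx1, hx2⟩ := hmeet i hi0
          rw [hsupQ] at hx1
          rcases List.mem_cons.mp hx1 with h' | h'
          · rwa [h'] at hx2
          · exact absurd hx2 (hiQ' x h')
        have hbPj : b ∈ (P j).2.2.support := by
          obtain ⟨x, hx1, hx2⟩ := hmeet j hj0
          rw [hsupQ''] at hx1
          rcases List.mem_append.mp hx1 with h' | h'
          · exact absurd hx2 (hjQ'' x h')
          · rw [List.mem_singleton] at h'
            rwa [h'] at hx2
        have hij : i ≠ j := by
          intro hije
          exact hjQ'' a Q''.start_mem_support (hije ▸ haPi)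
        refine ⟨hinf, i, j, hi0, hj0, hij, haPi, hbPj, hmeet, ?_⟩
        intro x hxQ hxa hxb
        constructor
        · have hx1 := hxQ
          rw [hsupQ] at hx1
          rcases List.mem_cons.mp hx1 with h' | h'
          · exact absurd h' hxa
          · exact hiQ' x h'
        · have hx2 := hxQ
          rw [hsupQ''] at hx2
          rcases List.mem_append.mp hx2 with h' | h'
          · exact hjQ'' x h'
          · rw [List.mem_singleton] at h'
            exact absurd h' hxb
  refine ⟨⟨a, b, Q, hgood⟩, ?_⟩
  have hbdd : BddAbove {n : ℕ | ∃ Qs : Fin n → Σ a : V, Σ b : V, G.Walk a b,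
      Function.Injective Qs ∧ (∀ t, IsGoodPath G P i0 (Qs t).2.2) ∧
      Pairwise fun s t => ∀ e ∈ (Qs s).2.2.edges, e ∉ (Qs t).2.2.edges} := by
    refine ⟨Fintype.card {l : List V // l.Nodup}, ?_⟩
    rintro n ⟨Qs, hQinj, hQgood, -⟩
    have hFinj : Function.Injective (fun t : Fin n =>
        (⟨(Qs t).2.2.support, aux_nodup_of_infix (hQgood t).1 (hlong i0).1⟩ :
          {l : List V // l.Nodup})) := by
      intro s t hst
      exact hQinj (aux_sigma_support_injective (congrArg Subtype.val hst))
    simpa using Fintype.card_le_of_injective _ hFinj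
  have hmem1 : 1 ∈ {n : ℕ | ∃ Qs : Fin n → Σ a : V, Σ b : V, G.Walk a b,
      Function.Injective Qs ∧ (∀ t, IsGoodPath G P i0 (Qs t).2.2) ∧
      Pairwise fun s t => ∀ e ∈ (Qs s).2.2.edges, e ∉ (Qs t).2.2.edges} := by
    refine ⟨fun _ => ⟨a, b, Q⟩, fun s t _ => Subsingleton.elim s t, fun _ => hgood, ?_⟩
    intro s t hst
    exact absurd (Subsingleton.elim s t) hst
  exact le_csSup hbdd hmem1
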